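/- There exists a constant C depending only on the dimension d such that, for every spin configuration σ ∈ {−1,+1}^Λ, the per-site error between the microscopic Hamiltonian and the first coarse-grained approximation satisfies (1/N) |H_N(σ) − H̄⁰(F(σ))| ≤ C (q/L) ‖∇V‖_∞, where H̄⁰(η) = E[H_N | F = η]. -/

import Mathlib

open Finset

/-- Real spin value of a Boolean spin variable (`true ↦ +1`, `false ↦ −1`). -/
def spin (b : Bool) : ℝ := if b then 1 else -1

/-- Integer spin value of a Boolean spin variable. -/
def spinZ (b : Bool) : ℤ := if b then 1 else -1

/-- The microscopic lattice site of the coarse cell `C_k` with offset `a`, i.e. the point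
`q·k + a` of `Λ = (ℤ/nℤ)ᵈ` with `n = m·q`. -/
def cellPoint (d m q : ℕ) (k : Fin d → ZMod m) (a : Fin d → Fin q) :
    Fin d → ZMod (m * q) :=
  fun i => ((q * (k i).val + (a i).val : ℕ) : ZMod (m * q))

/-- The blocking map `F`: the coarse spin `η(k) = Σ_{x ∈ C_k} σ(x)`. -/
def blockF (d m q : ℕ) (σ : (Fin d → ZMod (m * q)) → Bool)
    (k : Fin d → ZMod m) : ℤ :=
  ∑ a : Fin d → Fin q, spinZ (σ (cellPoint d m q k a))

/-- The fiber `{σ : F(σ) = η}` of the blocking map over a coarse configuration `η`. -/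
def fiber (d m q : ℕ) [NeZero m] [NeZero (m * q)]
    (η : (Fin d → ZMod m) → ℤ) : Finset ((Fin d → ZMod (m * q)) → Bool) :=
  Finset.univ.filter (fun σ => blockF d m q σ = η)

/-- The microscopic Hamiltonian
`H_N(σ) = −(1/2) Σ_x Σ_{y ≠ x} J(x−y) σ(x)σ(y) + h Σ_x σ(x)` on `Λ = (ℤ/nℤ)ᵈ`. -/
noncomputable def ham (d n : ℕ) [NeZero n] (J : (Fin d → ZMod n) → ℝ) (h : ℝ)
    (σ : (Fin d → ZMod n) → Bool) : ℝ :=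
  -(1 / 2) * ∑ x : Fin d → ZMod n, ∑ y ∈ Finset.univ.filter (fun y => y ≠ x),
      J (x - y) * (spin (σ x) * spin (σ y))
    + h * ∑ x : Fin d → ZMod n, spin (σ x)

/-- The centered representative `a/n ∈ (−1/2, 1/2]` of a coordinate `c ∈ ℤ/nℤ`
(here returned as the integer part `a ∈ (−n/2, n/2]`, as a real number). -/
noncomputable def cent (n : ℕ) (c : ZMod n) : ℝ :=
  if (c.val : ℝ) ≤ (n : ℝ) / 2 then (c.val : ℝ) else (c.val : ℝ) - (n : ℝ)

/-- The centered representative `x̂ ∈ (−1/2, 1/2]ᵈ` of a torus lattice point `x`. -/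
noncomputable def hat (d n : ℕ) (x : Fin d → ZMod n) : EuclideanSpace ℝ (Fin d) :=
  WithLp.toLp 2 (fun i => cent n (x i) / (n : ℝ))

/-- The interaction `J(x) = L⁻ᵈ V((n/L) x̂)` for `x ≠ 0`, `J(0) = 0`. -/
noncomputable def Jpot (d n : ℕ) (L : ℝ) (V : EuclideanSpace ℝ (Fin d) → ℝ)
    (x : Fin d → ZMod n) : ℝ :=
  if x = 0 then 0 else (1 / L ^ d) * V (((n : ℝ) / L) • hat d n x)


/-- torus distance to 0 -/
def td (n : ℕ) (c : ZMod n) : ℕ := min c.val (n - c.val)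

lemma spin_eq (b : Bool) : spin b = ((spinZ b : ℤ) : ℝ) := by cases b <;> simp [spin, spinZ]

lemma abs_spin (b : Bool) : |spin b| = 1 := by cases b <;> simp [spin]

lemma abs_cent (n : ℕ) [NeZero n] (c : ZMod n) : |cent n c| = (td n c : ℝ) := by
  have hv : c.val < n := ZMod.val_lt c
  unfold cent td
  split_ifs with h
  · rw [abs_of_nonneg (by positivity)]
    have h2 : 2 * c.val ≤ n := by
      by_contra hc
      push_neg at hc
      have : (n:ℝ) < 2 * c.val := by exact_mod_cast hc
      linarith
    rw [min_def, if_pos (by omega)]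
  · push_neg at h
    have hge : n < 2 * c.val := by
      by_contra hc
      push_neg at hc
      have : (2 * c.val : ℝ) ≤ n := by exact_mod_cast hc
      linarith
    have hvR : (c.val:ℝ) < n := by exact_mod_cast hv
    rw [abs_of_neg (by linarith), min_def, if_neg (by omega)]
    push_cast [Nat.cast_sub hv.le]
    ring

lemma td_le_half (n : ℕ) [NeZero n] (c : ZMod n) : 2 * td n c ≤ n := by
  have := ZMod.val_lt c; unfold td; omega

lemma td_add_le (n : ℕ) [NeZero n] (a b : ZMod n) : td n (a + b) ≤ td n a + td n b := by
  have hva := ZMod.val_lt a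
  have hvb := ZMod.val_lt b
  have hvab := ZMod.val_lt (a + b)
  have hadd := ZMod.val_add a b
  have h2 : (a+b).val = a.val + b.val ∨ (a+b).val = a.val + b.val - n := by
    rcases lt_or_ge (a.val + b.val) n with h | h
    · left; rw [hadd, Nat.mod_eq_of_lt h]
    · right; rw [hadd, Nat.mod_eq_sub_mod h, Nat.mod_eq_of_lt (by omega)]
  unfold td
  have e1 := min_le_left ((a+b).val) (n - (a+b).val)
  have e2 := min_le_right ((a+b).val) (n - (a+b).val)
  rcases min_cases a.val (n - a.val) with ⟨h1, _⟩ | ⟨h1, _⟩ <;>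
    rcases min_cases b.val (n - b.val) with ⟨h3, _⟩ | ⟨h3, _⟩ <;>
    rcases h2 with h | h <;> omega

lemma td_intCast_le (n : ℕ) [NeZero n] (j : ℤ) (t : ℕ) (hj : |j| ≤ (t:ℤ)) (htn : 2*t < n) :
    td n ((j : ZMod n)) ≤ t := by
  have hlt : ((j : ZMod n)).val < n := ZMod.val_lt _
  rw [abs_le] at hj
  unfold td
  have hdvd : (n:ℤ) ∣ (j - (((j : ZMod n)).val : ℤ)) := by
    rw [← ZMod.intCast_zmod_eq_zero_iff_dvd]
    push_cast [ZMod.natCast_val, ZMod.intCast_cast, ZMod.cast_id]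
    ring
  obtain ⟨k, hk⟩ := hdvd
  have hn : (0:ℤ) < n := by exact_mod_cast Nat.pos_of_ne_zero (NeZero.ne n)
  have hv0 : (0:ℤ) ≤ (((j : ZMod n)).val : ℤ) := by positivity
  have hvn : (((j : ZMod n)).val : ℤ) < n := by exact_mod_cast hlt
  have htn' : 2 * (t:ℤ) < n := by exact_mod_cast htn
  have hkcase : k = 0 ∨ k = -1 := by
    by_contra hc
    push_neg at hc
    have : 1 ≤ k ∨ k ≤ -2 := by omega
    rcases this with h | h
    · nlinarith
    · nlinarith
  have hor : ((j : ZMod n)).val ≤ t ∨ n - ((j : ZMod n)).val ≤ t := by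
    rcases hkcase with h | h <;> subst h <;> omega
  rcases hor with h | h
  · exact le_trans (min_le_left _ _) h
  · exact le_trans (min_le_right _ _) h

/-- cent differences wrap by a multiple of n -/
lemma cent_sub (n : ℕ) [NeZero n] (a b : ZMod n) :
    ∃ t : ℤ, cent n a - cent n b - cent n (a - b) = n * t ∧ |t| ≤ 1 := by
  have key : ∀ c : ZMod n, ∃ s : ℤ, cent n c = (c.val : ℝ) - n * s ∧ (s = 0 ∨ s = 1) := by
    intro c; unfold cent; split_ifs with h
    · exact ⟨0, by ring_nf, Or.inl rfl⟩
    · exact ⟨1, by ring_nf, Or.inr rfl⟩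
  obtain ⟨s1, hs1, _⟩ := key a
  obtain ⟨s2, hs2, _⟩ := key b
  obtain ⟨s3, hs3, _⟩ := key (a - b)
  -- a.val - b.val - (a-b).val = n * u for some integer u
  have hdvd : (n:ℤ) ∣ ((a.val : ℤ) - b.val - (a - b).val) := by
    rw [← ZMod.intCast_zmod_eq_zero_iff_dvd]
    push_cast [ZMod.natCast_val, ZMod.intCast_cast, ZMod.cast_id]
    ring
  obtain ⟨u, hu⟩ := hdvd
  refine ⟨u - s1 + s2 + s3, ?_, ?_⟩
  · rw [hs1, hs2, hs3]
    have : ((a.val : ℤ) - b.val - (a - b).val : ℝ) = ((n : ℤ) * u : ℝ) := by exact_mod_cast congrArg (Int.cast : ℤ → ℝ) hu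
    push_cast at this ⊢
    linarith
  · -- |u - s1 + s2 + s3| ≤ 1 : from size bounds
    have hb1 := abs_cent n a; have hb2 := abs_cent n b; have hb3 := abs_cent n (a-b)
    have h1 := td_le_half n a; have h2 := td_le_half n b; have h3 := td_le_half n (a-b)
    have hn : (0:ℝ) < n := by exact_mod_cast Nat.pos_of_ne_zero (NeZero.ne n)
    have habs : |cent n a - cent n b - cent n (a - b)| ≤ (3/2) * n := by
      have e1 : |cent n a| ≤ n/2 := by rw [hb1]; have : (2 * td n a : ℝ) ≤ n := by exact_mod_cast h1
                                       push_cast at this ⊢; linarith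
      have e2 : |cent n b| ≤ n/2 := by rw [hb2]; have : (2 * td n b : ℝ) ≤ n := by exact_mod_cast h2
                                       push_cast at this ⊢; linarith
      have e3 : |cent n (a-b)| ≤ n/2 := by rw [hb3]; have : (2 * td n (a-b) : ℝ) ≤ n := by exact_mod_cast h3
                                           push_cast at this ⊢; linarith
      obtain ⟨f1, f1'⟩ := abs_le.mp e1
      obtain ⟨f2, f2'⟩ := abs_le.mp e2
      obtain ⟨f3, f3'⟩ := abs_le.mp e3
      rw [abs_le]; constructor <;> linarith
    have heq : cent n a - cent n b - cent n (a - b) = n * (u - s1 + s2 + s3 : ℤ) := by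
      rw [hs1, hs2, hs3]
      have : ((a.val : ℤ) - b.val - (a - b).val : ℝ) = ((n : ℤ) * u : ℝ) := by exact_mod_cast congrArg (Int.cast : ℤ → ℝ) hu
      push_cast at this ⊢
      linarith
    rw [heq] at habs
    rw [abs_mul, abs_of_pos hn] at habs
    have hle : |((u - s1 + s2 + s3 : ℤ) : ℝ)| ≤ (3/2 : ℝ) := by
      nlinarith [abs_nonneg ((u - s1 + s2 + s3 : ℤ) : ℝ)]
    by_contra hc
    push_neg at hc
    have h2 : (2:ℤ) ≤ |u - s1 + s2 + s3| := by omega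
    have h2' : (2:ℝ) ≤ |((u - s1 + s2 + s3 : ℤ) : ℝ)| := by
      rw [← Int.cast_abs]; exact_mod_cast h2
    linarith

section Vlem
variable {d : ℕ} (V : EuclideanSpace ℝ (Fin d) → ℝ)

lemma coord_le_norm (u : EuclideanSpace ℝ (Fin d)) (i : Fin d) : |u i| ≤ ‖u‖ := by
  rw [EuclideanSpace.norm_eq]
  have h1 : |u i| = Real.sqrt (‖u i‖^2) := by
    rw [Real.sqrt_sq_eq_abs, abs_norm, Real.norm_eq_abs]
  rw [h1]
  apply Real.sqrt_le_sqrt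
  exact Finset.single_le_sum (f := fun j => ‖u j‖^2) (fun j _ => by positivity) (Finset.mem_univ i)

lemma norm_le_coords (u : EuclideanSpace ℝ (Fin d)) (r : ℝ) (hr : 0 ≤ r) (h : ∀ i, |u i| ≤ r) :
    ‖u‖ ≤ Real.sqrt d * r := by
  rw [EuclideanSpace.norm_eq]
  have : ∑ i, ‖u i‖^2 ≤ (d : ℝ) * r^2 := by
    calc ∑ i, ‖u i‖^2 ≤ ∑ _i : Fin d, r^2 := by
          apply Finset.sum_le_sum
          intro i _
          have h2 : ‖u i‖ ≤ r := by rw [Real.norm_eq_abs]; exact h i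
          nlinarith [norm_nonneg (u i)]
      _ = (d:ℝ) * r^2 := by simp [Finset.sum_const]
  calc Real.sqrt (∑ i, ‖u i‖^2) ≤ Real.sqrt ((d:ℝ) * r^2) := Real.sqrt_le_sqrt this
    _ = Real.sqrt d * r := by rw [Real.sqrt_mul (by positivity), Real.sqrt_sq hr]

lemma V_lip (hV : ContDiff ℝ 1 V) (GV : ℝ) (hGV : ∀ z, ‖gradient V z‖ ≤ GV) (a b : EuclideanSpace ℝ (Fin d)) :
    |V a - V b| ≤ GV * ‖a - b‖ := by
  have hdiff : Differentiable ℝ V := hV.differentiable one_ne_zero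
  have hfd : ∀ x, ‖fderiv ℝ V x‖ ≤ GV := by
    intro x
    have heq : ‖gradient V x‖ = ‖fderiv ℝ V x‖ := by
      unfold gradient
      exact LinearIsometryEquiv.norm_map _ _
    rw [← heq]
    exact hGV x
  have := Convex.norm_image_sub_le_of_norm_fderiv_le (f := V)
    (fun x _ => hdiff.differentiableAt) (fun x _ => hfd x) convex_univ (Set.mem_univ b) (Set.mem_univ a)
  simpa [Real.norm_eq_abs] using this

lemma V_bdd (hd : 1 ≤ d) (hV : ContDiff ℝ 1 V) (hsupp : ∀ z, 1 < ‖z‖ → V z = 0)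
    (GV : ℝ) (hGV : ∀ z, ‖gradient V z‖ ≤ GV) (a : EuclideanSpace ℝ (Fin d)) :
    |V a| ≤ 3 * GV := by
  have hGV0 : 0 ≤ GV := le_trans (norm_nonneg _) (hGV 0)
  rcases le_or_gt ‖a‖ 1 with h | h
  · set e : EuclideanSpace ℝ (Fin d) := EuclideanSpace.single (⟨0, hd⟩ : Fin d) (2:ℝ) with he
    have hne : ‖e‖ = 2 := by rw [he, EuclideanSpace.norm_single]; norm_num
    have hVe : V e = 0 := hsupp e (by rw [hne]; norm_num)
    have := V_lip V hV GV hGV a e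
    rw [hVe, sub_zero] at this
    have : ‖a - e‖ ≤ 3 := by
      calc ‖a - e‖ ≤ ‖a‖ + ‖e‖ := norm_sub_le _ _
        _ ≤ 3 := by rw [hne]; linarith
    nlinarith [V_lip V hV GV hGV a e, abs_nonneg (V a - V e), norm_nonneg (a - e),
      hVe]
  · rw [hsupp a h, abs_zero]; positivity
end Vlem

section Cell
variable (m q : ℕ)

/-- coarse cell index of a microscopic coordinate -/
def cf (c : ZMod (m*q)) : ZMod m := ((c.val / q : ℕ) : ZMod m)

variable [NeZero m] [NeZero (m*q)]

set_option linter.unusedSectionVars false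

lemma td_cell (hm2 : 2 ≤ m) (hq : 2 ≤ q) (a b : ZMod (m*q)) :
    td (m*q) ((a - b) - ((q * ((cf m q a - cf m q b).val) : ℕ) : ZMod (m*q))) ≤ q - 1 := by
  have hq0 : 0 < q := by omega
  set Δ : ZMod m := cf m q a - cf m q b with hΔ
  obtain ⟨va, hva, hva'⟩ : ∃ va, a.val = va ∧ ((va:ℕ) : ZMod (m*q)) = a :=
    ⟨a.val, rfl, ZMod.natCast_rightInverse a⟩
  obtain ⟨vb, hvb, hvb'⟩ : ∃ vb, b.val = vb ∧ ((vb:ℕ) : ZMod (m*q)) = b :=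
    ⟨b.val, rfl, ZMod.natCast_rightInverse b⟩
  obtain ⟨v, hv, hv'⟩ : ∃ v, Δ.val = v ∧ ((v:ℕ) : ZMod m) = Δ :=
    ⟨Δ.val, rfl, ZMod.natCast_rightInverse Δ⟩
  set A := va / q with hAdef
  set B := vb / q with hBdef
  set r := va % q with hrdef
  set s := vb % q with hsdef
  have hA : q * A + r = va := Nat.div_add_mod va q
  have hB : q * B + s = vb := Nat.div_add_mod vb q
  have hr : r < q := Nat.mod_lt _ hq0
  have hs : s < q := Nat.mod_lt _ hq0
  have hΔeq : ((A : ℕ) : ZMod m) - ((B : ℕ) : ZMod m) = Δ := by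
    rw [hΔ]; simp only [cf, hva, hvb, hAdef, hBdef]
  have hmdvd : (m:ℤ) ∣ ((A:ℤ) - B - v) := by
    rw [← ZMod.intCast_zmod_eq_zero_iff_dvd]
    push_cast
    rw [hv', ← hΔeq]
    ring
  obtain ⟨t, ht⟩ := hmdvd
  set j : ℤ := (r:ℤ) - s with hjdef
  have hA' : (q:ℤ) * A + r = va := by exact_mod_cast hA
  have hB' : (q:ℤ) * B + s = vb := by exact_mod_cast hB
  have hE : (va:ℤ) - vb - ((q*v:ℕ):ℤ) - j = ((m*q:ℕ):ℤ) * t := by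
    push_cast
    rw [hjdef]
    linear_combination (q:ℤ) * ht - hA' + hB'
  have hkey : (a - b) - ((q * Δ.val : ℕ) : ZMod (m*q)) = (j : ZMod (m*q)) := by
    have hz : ((((va:ℤ) - vb - ((q*v:ℕ):ℤ) - j : ℤ)) : ZMod (m*q)) = 0 :=
      (ZMod.intCast_zmod_eq_zero_iff_dvd _ _).mpr ⟨t, hE⟩
    have hc : (((va:ℤ) - vb - ((q*v:ℕ):ℤ) - j : ℤ) : ZMod (m*q))
        = ((a - b) - ((q * Δ.val : ℕ) : ZMod (m*q))) - (j : ZMod (m*q)) := by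
      rw [hv]
      push_cast [hva', hvb']
      ring
    rw [hc] at hz
    exact sub_eq_zero.mp hz
  rw [hkey]
  apply td_intCast_le
  · rw [hjdef, abs_le]
    constructor <;> push_cast <;> omega
  · have h4 : 2*q ≤ m*q := Nat.mul_le_mul_right q hm2
    omega

lemma wvec_ne_zero (hq : 2 ≤ q) (k l : ZMod m) (hkl : k ≠ l) :
    ((q * ((k - l).val) : ℕ) : ZMod (m*q)) ≠ 0 := by
  have hm : 0 < m := Nat.pos_of_ne_zero (NeZero.ne m)
  have hq0 : 0 < q := by omega
  have hd : k - l ≠ 0 := sub_ne_zero.mpr hkl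
  have hv1 : 1 ≤ (k - l).val := by
    rcases Nat.eq_zero_or_pos (k - l).val with h | h
    · exact absurd ((ZMod.val_eq_zero _).mp h) hd
    · exact h
  have hv2 : (k - l).val < m := ZMod.val_lt _
  intro hc
  have hlt : (q * ((k - l).val)) < m * q := by nlinarith
  have hval : (((q * ((k - l).val) : ℕ) : ZMod (m*q))).val = q * ((k - l).val) := ZMod.val_cast_of_lt hlt
  rw [hc, ZMod.val_zero] at hval
  have : 0 < q * ((k - l).val) := Nat.mul_pos hq0 hv1
  omega
end Cell

noncomputable def phi (d n : ℕ) (L : ℝ) (z : Fin d → ZMod n) : EuclideanSpace ℝ (Fin d) :=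
  WithLp.toLp 2 (fun i => cent n (z i) / L)

section Jlem
variable (d n : ℕ) [NeZero n] (L : ℝ) (V : EuclideanSpace ℝ (Fin d) → ℝ)

lemma smul_hat (hL : L ≠ 0) (z : Fin d → ZMod n) :
    ((n : ℝ) / L) • hat d n z = phi d n L z := by
  have hn : (n:ℝ) ≠ 0 := Nat.cast_ne_zero.mpr (NeZero.ne n)
  ext i
  show ((n : ℝ) / L) * (cent n (z i) / (n : ℝ)) = cent n (z i) / L
  rw [div_mul_div_comm, mul_comm (n:ℝ), mul_div_mul_right _ _ hn]

lemma Jpot_zero : Jpot d n L V 0 = 0 := if_pos rfl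

lemma Jpot_eq (hL : L ≠ 0) (z : Fin d → ZMod n) (hz : z ≠ 0) :
    Jpot d n L V z = (1 / L ^ d) * V (phi d n L z) := by
  rw [Jpot, if_neg hz, smul_hat d n L hL z]

lemma phi_apply (z : Fin d → ZMod n) (i : Fin d) : phi d n L z i = cent n (z i) / L := rfl

lemma V_phi_zero (hL : 0 < L) (hsupp : ∀ u, 1 < ‖u‖ → V u = 0)
    (z : Fin d → ZMod n) (i : Fin d) (hi : L < |cent n (z i)|) :
    V (phi d n L z) = 0 := by
  apply hsupp
  calc (1:ℝ) < |cent n (z i)| / L := by rw [lt_div_iff₀ hL]; linarith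
    _ = |phi d n L z i| := by rw [phi_apply, abs_div, abs_of_pos hL]
    _ ≤ ‖phi d n L z‖ := coord_le_norm _ _

lemma Jpot_abs_le (hd : 1 ≤ d) (hL : 0 < L) (hV : ContDiff ℝ 1 V)
    (hsupp : ∀ u, 1 < ‖u‖ → V u = 0) (GV : ℝ) (hGV : ∀ u, ‖gradient V u‖ ≤ GV)
    (z : Fin d → ZMod n) : |Jpot d n L V z| ≤ (1 / L ^ d) * (3 * GV) := by
  have hGV0 : 0 ≤ GV := le_trans (norm_nonneg _) (hGV 0)
  by_cases hz : z = 0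
  · rw [hz, Jpot_zero, abs_zero]; positivity
  · rw [Jpot_eq d n L V hL.ne' z hz, abs_mul, abs_of_pos (by positivity : (0:ℝ) < 1 / L ^ d)]
    exact mul_le_mul_of_nonneg_left (V_bdd V hd hV hsupp GV hGV _) (by positivity)

lemma pair_est (hd : 1 ≤ d) (hV : ContDiff ℝ 1 V)
    (hsupp : ∀ u, 1 < ‖u‖ → V u = 0) (GV : ℝ) (hGV : ∀ u, ‖gradient V u‖ ≤ GV)
    (q : ℕ) (hq : 2 ≤ q) (hLq : (q:ℝ) ≤ L) (hnL : 4*L ≤ (n:ℝ))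
    (z w : Fin d → ZMod n) (hz : z ≠ 0) (hw : w ≠ 0)
    (hclose : ∀ i, td n (z i - w i) ≤ q - 1) :
    |Jpot d n L V z - Jpot d n L V w| ≤ (1 / L ^ d) * (GV * (Real.sqrt d * ((q:ℝ) / L))) := by
  have hGV0 : 0 ≤ GV := le_trans (norm_nonneg _) (hGV 0)
  have hq0 : (0:ℝ) < q := by positivity
  have hL : 0 < L := lt_of_lt_of_le hq0 hLq
  rw [Jpot_eq d n L V hL.ne' z hz, Jpot_eq d n L V hL.ne' w hw, ← mul_sub, abs_mul,
    abs_of_pos (by positivity : (0:ℝ) < 1 / L ^ d)]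
  apply mul_le_mul_of_nonneg_left _ (by positivity)
  by_cases hc : ∀ i, |cent n (z i) - cent n (w i)| ≤ (q:ℝ) - 1
  · -- no wrap: Lipschitz bound
    calc |V (phi d n L z) - V (phi d n L w)| ≤ GV * ‖phi d n L z - phi d n L w‖ :=
          V_lip V hV GV hGV _ _
      _ ≤ GV * (Real.sqrt d * ((q:ℝ) / L)) := by
          apply mul_le_mul_of_nonneg_left _ hGV0
          apply norm_le_coords _ _ (by positivity)
          intro i
          have : (phi d n L z - phi d n L w) i = cent n (z i) / L - cent n (w i) / L := rfl
          rw [this, div_sub_div_same, abs_div, abs_of_pos hL]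
          gcongr
          linarith [hc i]
  · -- wrap: both sides vanish
    push_neg at hc
    obtain ⟨i0, hi0⟩ := hc
    obtain ⟨t, ht, habs⟩ := cent_sub n (z i0) (w i0)
    have hcent3 : |cent n (z i0 - w i0)| ≤ (q:ℝ) - 1 := by
      rw [abs_cent]
      have := hclose i0
      have h2 : (td n (z i0 - w i0) : ℝ) ≤ ((q - 1 : ℕ) : ℝ) := by exact_mod_cast this
      have h3 : ((q - 1 : ℕ) : ℝ) = (q:ℝ) - 1 := by
        have : 1 ≤ q := by omega
        push_cast [Nat.cast_sub this]
        ring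
      linarith
    have hne : t ≠ 0 := by
      intro h0
      rw [h0] at ht
      push_cast at ht
      have : cent n (z i0) - cent n (w i0) = cent n (z i0 - w i0) := by linarith
      rw [this] at hi0
      linarith
    have hn2 : (0:ℝ) < n := by
      have : (0:ℝ) < 4*L := by linarith
      linarith
    have ht1 : (1:ℝ) ≤ |(t:ℝ)| := by
      have h0 : (0:ℤ) < |t| := abs_pos.mpr hne
      have : (1:ℤ) ≤ |t| := by omega
      calc (1:ℝ) ≤ ((|t| : ℤ) : ℝ) := by exact_mod_cast this
        _ = |(t:ℝ)| := by rw [Int.cast_abs]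
    have hbig : (n:ℝ) - ((q:ℝ) - 1) ≤ |cent n (z i0) - cent n (w i0)| := by
      have h1 : |(n:ℝ) * t| ≤ |cent n (z i0) - cent n (w i0)| + |cent n (z i0 - w i0)| := by
        rw [← ht]
        exact (abs_sub _ _)
      have h2 : (n:ℝ) ≤ |(n:ℝ) * t| := by
        rw [abs_mul, abs_of_pos hn2]
        nlinarith
      linarith
    have hhz : 2 * |cent n (z i0)| ≤ (n:ℝ) := by
      rw [abs_cent]
      have := td_le_half n (z i0)
      exact_mod_cast this
    have hhw : 2 * |cent n (w i0)| ≤ (n:ℝ) := by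
      rw [abs_cent]
      have := td_le_half n (w i0)
      exact_mod_cast this
    have hzbig : L < |cent n (z i0)| := by
      have := abs_sub_abs_le_abs_sub (cent n (z i0)) (cent n (w i0))
      have h5 : |cent n (z i0) - cent n (w i0)| ≤ |cent n (z i0)| + |cent n (w i0)| := abs_sub _ _
      nlinarith
    have hwbig : L < |cent n (w i0)| := by
      have h5 : |cent n (z i0) - cent n (w i0)| ≤ |cent n (z i0)| + |cent n (w i0)| := abs_sub _ _
      nlinarith
    rw [V_phi_zero d n L V hL hsupp z i0 hzbig, V_phi_zero d n L V hL hsupp w i0 hwbig]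
    simp
    positivity
end Jlem

section Count
open Finset

lemma card_filter_pi_le {n d : ℕ} [NeZero n] (P : Fin d → ZMod n → Prop) [∀ i, DecidablePred (P i)]
    [DecidablePred (fun y : Fin d → ZMod n => ∀ i, P i (y i))] :
    (Finset.univ.filter (fun y : Fin d → ZMod n => ∀ i, P i (y i))).card
      ≤ ∏ i, (Finset.univ.filter (P i)).card := by
  rw [← Fintype.card_piFinset]
  apply Finset.card_le_card
  intro y hy
  rw [Finset.mem_filter] at hy
  rw [Fintype.mem_piFinset]
  intro i
  rw [Finset.mem_filter]
  exact ⟨Finset.mem_univ _, hy.2 i⟩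

lemma card_cell_fiber_le (m q : ℕ) [NeZero m] [NeZero (m*q)] (hq : 1 ≤ q) (k : ZMod m) :
    (Finset.univ.filter (fun c : ZMod (m*q) => cf m q c = k)).card ≤ q := by
  have hq0 : 0 < q := hq
  refine le_trans (Finset.card_le_card_of_injOn (fun c => (⟨c.val % q, Nat.mod_lt _ hq0⟩ : Fin q))
    (fun _ _ => Finset.mem_univ _) ?_) (by simp)
  intro c1 h1 c2 h2 heq
  rw [Finset.mem_coe, Finset.mem_filter] at h1 h2
  have hmod : c1.val % q = c2.val % q := congrArg Fin.val heq
  have hdiv : c1.val / q = c2.val / q := by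
    have hcf : cf m q c1 = cf m q c2 := h1.2.trans h2.2.symm
    have hl1 : c1.val / q < m := Nat.div_lt_of_lt_mul (lt_of_lt_of_eq (ZMod.val_lt c1) (Nat.mul_comm m q))
    have hl2 : c2.val / q < m := Nat.div_lt_of_lt_mul (lt_of_lt_of_eq (ZMod.val_lt c2) (Nat.mul_comm m q))
    have e1 : ((c1.val / q : ℕ) : ZMod m).val = c1.val / q := ZMod.val_cast_of_lt hl1
    have e2 : ((c2.val / q : ℕ) : ZMod m).val = c2.val / q := ZMod.val_cast_of_lt hl2
    rw [cf, cf] at hcf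
    rw [← e1, ← e2, hcf]
  have : c1.val = c2.val := by
    have a1 := Nat.div_add_mod c1.val q
    have a2 := Nat.div_add_mod c2.val q
    rw [hdiv, hmod] at a1
    omega
  exact ZMod.val_injective _ this

lemma card_td_le (n : ℕ) [NeZero n] (t : ℕ) :
    (Finset.univ.filter (fun c : ZMod n => td n c ≤ t)).card ≤ 2*t + 1 := by
  have hsub : (Finset.univ.filter (fun c : ZMod n => td n c ≤ t))
      ⊆ (Finset.Icc (-(t:ℤ)) (t:ℤ)).image (fun j : ℤ => (j : ZMod n)) := by
    intro c hc
    rw [Finset.mem_filter] at hc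
    rw [Finset.mem_image]
    have hval : c.val < n := ZMod.val_lt c
    have htd := hc.2
    unfold td at htd
    rcases le_or_gt c.val t with h | h
    · refine ⟨(c.val : ℤ), ?_, ?_⟩
      · rw [Finset.mem_Icc]; constructor <;> omega
      · push_cast [ZMod.natCast_val, ZMod.cast_id]
        rfl
    · have h2 : n - c.val ≤ t := by
        rcases min_cases c.val (n - c.val) with ⟨hmin, _⟩ | ⟨hmin, _⟩ <;> omega
      refine ⟨(c.val : ℤ) - n, ?_, ?_⟩
      · rw [Finset.mem_Icc]
        constructor
        · have : (n:ℤ) - c.val ≤ t := by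
            have : ((n - c.val : ℕ) : ℤ) ≤ t := by exact_mod_cast h2
            push_cast [Nat.cast_sub hval.le] at this
            linarith
          linarith
        · have : (c.val : ℤ) < n := by exact_mod_cast hval
          have ht0 : (0:ℤ) ≤ t := by positivity
          linarith
      · push_cast [ZMod.natCast_val, ZMod.cast_id, ZMod.natCast_self]
        simp
  calc (Finset.univ.filter (fun c : ZMod n => td n c ≤ t)).card
      ≤ ((Finset.Icc (-(t:ℤ)) (t:ℤ)).image (fun j : ℤ => (j : ZMod n))).card :=
        Finset.card_le_card hsub
    _ ≤ (Finset.Icc (-(t:ℤ)) (t:ℤ)).card := Finset.card_image_le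
    _ = 2*t + 1 := by
        rw [Int.card_Icc]
        omega
end Count

lemma q_pos (m q : ℕ) [NeZero (m*q)] : 0 < q := by
  rcases Nat.eq_zero_or_pos q with h | h
  · exfalso; exact (NeZero.ne (m*q)) (by rw [h, Nat.mul_zero])
  · exact h

lemma m_pos (m q : ℕ) [NeZero (m*q)] : 0 < m := by
  rcases Nat.eq_zero_or_pos m with h | h
  · exfalso; exact (NeZero.ne (m*q)) (by rw [h, Nat.zero_mul])
  · exact h

section CellEquiv
variable (m q : ℕ) [NeZero m] [NeZero (m*q)]

lemma cp_lt (k : ZMod m) (a : Fin q) : q * k.val + a.val < m * q := by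
  have h1 : k.val < m := ZMod.val_lt k
  have h2 : a.val < q := a.isLt
  nlinarith

def cellEquiv : ZMod m × Fin q ≃ ZMod (m*q) where
  toFun p := ((q * p.1.val + p.2.val : ℕ) : ZMod (m*q))
  invFun c := (((c.val / q : ℕ) : ZMod m), ⟨c.val % q, Nat.mod_lt _ (q_pos m q)⟩)
  left_inv := by
    rintro ⟨k, a⟩
    have hlt := cp_lt m q k a
    have hval : (((q * k.val + a.val : ℕ)) : ZMod (m*q)).val = q * k.val + a.val :=
      ZMod.val_cast_of_lt hlt
    have hq0 := q_pos m q
    have h1 : ((q * k.val + a.val : ℕ) : ZMod (m*q)).val / q = k.val := by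
      rw [hval, Nat.mul_add_div hq0]
      have := Nat.div_eq_of_lt a.isLt
      omega
    have h2 : ((q * k.val + a.val : ℕ) : ZMod (m*q)).val % q = a.val := by
      rw [hval, Nat.mul_add_mod]
      exact Nat.mod_eq_of_lt a.isLt
    dsimp only
    rw [Prod.mk.injEq]
    constructor
    · rw [h1]; exact ZMod.natCast_rightInverse k
    · exact Fin.ext h2
  right_inv := by
    intro c
    show ((q * (((c.val / q : ℕ) : ZMod m)).val + c.val % q : ℕ) : ZMod (m*q)) = c
    have hdq : c.val / q < m :=
      Nat.div_lt_of_lt_mul (lt_of_lt_of_eq (ZMod.val_lt c) (Nat.mul_comm m q))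
    rw [ZMod.val_cast_of_lt hdq]
    have : q * (c.val / q) + c.val % q = c.val := Nat.div_add_mod c.val q
    rw [this]
    exact ZMod.natCast_rightInverse c

lemma cf_cellEquiv (k : ZMod m) (a : Fin q) : cf m q (cellEquiv m q (k, a)) = k :=
  congrArg Prod.fst ((cellEquiv m q).left_inv (k, a))

variable (d : ℕ)

def latEquiv : (Fin d → ZMod m) × (Fin d → Fin q) ≃ (Fin d → ZMod (m*q)) :=
  (Equiv.arrowProdEquivProdArrow (Fin d) (fun _ => ZMod m) (fun _ => Fin q)).symm.trans
    (Equiv.piCongrRight (fun _ => cellEquiv m q))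

lemma latEquiv_apply (k : Fin d → ZMod m) (a : Fin d → Fin q) :
    latEquiv m q d (k, a) = cellPoint d m q k a := rfl

lemma cf_cellPoint (k : Fin d → ZMod m) (a : Fin d → Fin q) (i : Fin d) :
    cf m q (cellPoint d m q k a i) = k i := cf_cellEquiv m q (k i) (a i)

lemma sum_lattice {M : Type*} [AddCommMonoid M] (f : (Fin d → ZMod (m*q)) → M) :
    ∑ x, f x = ∑ k : Fin d → ZMod m, ∑ a : Fin d → Fin q, f (cellPoint d m q k a) := by
  rw [← Equiv.sum_comp (latEquiv m q d) f]
  rw [Fintype.sum_prod_type]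
  rfl

lemma blockF_cast (σ : (Fin d → ZMod (m*q)) → Bool) (k : Fin d → ZMod m) :
    ((blockF d m q σ k : ℤ) : ℝ) = ∑ a : Fin d → Fin q, spin (σ (cellPoint d m q k a)) := by
  rw [blockF]
  push_cast
  exact Finset.sum_congr rfl (fun a _ => (spin_eq _).symm)
end CellEquiv

def wvec (d m q : ℕ) (k l : Fin d → ZMod m) : Fin d → ZMod (m*q) :=
  fun i => ((q * ((k i - l i).val) : ℕ) : ZMod (m*q))

noncomputable def Kpot (d m q : ℕ) (L : ℝ) (V : EuclideanSpace ℝ (Fin d) → ℝ)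
    (x y : Fin d → ZMod (m*q)) : ℝ :=
  Jpot d (m*q) L V (wvec d m q (fun i => cf m q (x i)) (fun i => cf m q (y i)))

noncomputable def Hbar (d m q : ℕ) [NeZero (m*q)] (L : ℝ) (V : EuclideanSpace ℝ (Fin d) → ℝ)
    (h : ℝ) (σ : (Fin d → ZMod (m*q)) → Bool) : ℝ :=
  -(1/2) * (∑ x, ∑ y, Kpot d m q L V x y * (spin (σ x) * spin (σ y)))
    + h * ∑ x, spin (σ x)

section HbarConst
variable (d m q : ℕ) [NeZero m] [NeZero (m*q)] (L : ℝ) (V : EuclideanSpace ℝ (Fin d) → ℝ) (h : ℝ)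

lemma Hbar_blockF (σ : (Fin d → ZMod (m*q)) → Bool) :
    Hbar d m q L V h σ =
      -(1/2) * (∑ k : Fin d → ZMod m, ∑ l : Fin d → ZMod m,
          Jpot d (m*q) L V (wvec d m q k l) *
            (((blockF d m q σ k : ℤ) : ℝ) * ((blockF d m q σ l : ℤ) : ℝ)))
        + h * ∑ k : Fin d → ZMod m, ((blockF d m q σ k : ℤ) : ℝ) := by
  rw [Hbar]
  congr 1
  · congr 1
    rw [sum_lattice m q d]
    apply Finset.sum_congr rfl
    intro k _
    have hK : ∀ (a b : Fin d → Fin q), Kpot d m q L V (cellPoint d m q k a) (cellPoint d m q k b)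
        = Kpot d m q L V (cellPoint d m q k a) (cellPoint d m q k b) := fun _ _ => rfl
    have hre : ∀ a : Fin d → Fin q,
        (∑ y, Kpot d m q L V (cellPoint d m q k a) y *
          (spin (σ (cellPoint d m q k a)) * spin (σ y)))
        = ∑ l : Fin d → ZMod m, ∑ b : Fin d → Fin q,
            Jpot d (m*q) L V (wvec d m q k l) *
              (spin (σ (cellPoint d m q k a)) * spin (σ (cellPoint d m q l b))) := by
      intro a
      rw [sum_lattice m q d]
      apply Finset.sum_congr rfl
      intro l _
      apply Finset.sum_congr rfl
      intro b _
      congr 1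
      rw [Kpot]
      congr 1
      funext i
      simp only [wvec]
      rw [cf_cellPoint, cf_cellPoint]
    calc ∑ a : Fin d → Fin q, ∑ y, Kpot d m q L V (cellPoint d m q k a) y *
            (spin (σ (cellPoint d m q k a)) * spin (σ y))
        = ∑ a : Fin d → Fin q, ∑ l : Fin d → ZMod m, ∑ b : Fin d → Fin q,
            Jpot d (m*q) L V (wvec d m q k l) *
              (spin (σ (cellPoint d m q k a)) * spin (σ (cellPoint d m q l b))) :=
          Finset.sum_congr rfl (fun a _ => hre a)
      _ = ∑ l : Fin d → ZMod m, ∑ a : Fin d → Fin q, ∑ b : Fin d → Fin q,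
            Jpot d (m*q) L V (wvec d m q k l) *
              (spin (σ (cellPoint d m q k a)) * spin (σ (cellPoint d m q l b))) :=
          by rw [Finset.sum_comm]
      _ = ∑ l : Fin d → ZMod m, Jpot d (m*q) L V (wvec d m q k l) *
            (((blockF d m q σ k : ℤ) : ℝ) * ((blockF d m q σ l : ℤ) : ℝ)) := by
          apply Finset.sum_congr rfl
          intro l _
          rw [blockF_cast, blockF_cast, Finset.sum_mul_sum]
          rw [Finset.mul_sum]
          apply Finset.sum_congr rfl
          intro a _
          rw [Finset.mul_sum]
  · congr 1
    rw [sum_lattice m q d]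
    apply Finset.sum_congr rfl
    intro k _
    rw [blockF_cast]
end HbarConst

set_option maxHeartbeats 1000000 in
lemma row_est (d m q : ℕ) [NeZero m] [NeZero (m*q)] (hd : 1 ≤ d) (hm : 2 ≤ m) (hq : 2 ≤ q)
    (V : EuclideanSpace ℝ (Fin d) → ℝ) (hV : ContDiff ℝ 1 V)
    (hsupp : ∀ u, 1 < ‖u‖ → V u = 0) (GV : ℝ) (hGV : ∀ u, ‖gradient V u‖ ≤ GV)
    (L : ℝ) (hLq : (q:ℝ) ≤ L) (hLn : 4*L ≤ ((m:ℝ)*q))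
    (x : Fin d → ZMod (m*q)) :
    ∑ y : Fin d → ZMod (m*q), |Jpot d (m*q) L V (x - y) - Kpot d m q L V x y|
      ≤ ((3:ℝ) + 6^d * Real.sqrt d) * ((q:ℝ)/L) * GV := by
  have hGV0 : 0 ≤ GV := le_trans (norm_nonneg _) (hGV 0)
  have hq0 : (0:ℝ) < q := by positivity
  have hL : 0 < L := lt_of_lt_of_le hq0 hLq
  have hL2 : (2:ℝ) ≤ L := le_trans (by exact_mod_cast hq) hLq
  have hnL : 4*L ≤ ((m*q : ℕ):ℝ) := by push_cast; linarith
  set B1 : ℝ := (1/L^d) * (3*GV) with hB1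
  set B2 : ℝ := (1/L^d) * (GV * (Real.sqrt d * ((q:ℝ)/L))) with hB2
  have hB1n : 0 ≤ B1 := by positivity
  have hB2n : 0 ≤ B2 := by positivity
  set t0 : ℕ := ⌈L⌉₊ + q with ht0
  set p : (Fin d → ZMod (m*q)) → Prop := fun y => ∀ i, cf m q (y i) = cf m q (x i) with hp
  set f : (Fin d → ZMod (m*q)) → ℝ := fun y => |Jpot d (m*q) L V (x - y) - Kpot d m q L V x y|
    with hf
  have hsplit : ∑ y, f y = (∑ y ∈ Finset.univ.filter p, f y)
      + ∑ y ∈ Finset.univ.filter (fun y => ¬ p y), f y :=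
    (Finset.sum_filter_add_sum_filter_not _ _ _).symm
  -- part 1 : same cell
  have hpart1 : ∑ y ∈ Finset.univ.filter p, f y ≤ (q:ℝ)^d * B1 := by
    have hterm : ∀ y ∈ Finset.univ.filter p, f y ≤ B1 := by
      intro y hy
      rw [Finset.mem_filter] at hy
      have hK0 : Kpot d m q L V x y = 0 := by
        rw [Kpot]
        have : wvec d m q (fun i => cf m q (x i)) (fun i => cf m q (y i)) = 0 := by
          funext i
          show ((q * ((cf m q (x i) - cf m q (y i)).val) : ℕ) : ZMod (m*q)) = 0
          rw [hy.2 i, sub_self, ZMod.val_zero, Nat.mul_zero, Nat.cast_zero]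
        rw [this, Jpot_zero]
      show |Jpot d (m*q) L V (x - y) - Kpot d m q L V x y| ≤ B1
      rw [hK0, sub_zero, hB1]
      exact Jpot_abs_le d (m*q) L V hd hL hV hsupp GV hGV _
    have hcard : ((Finset.univ.filter p).card : ℝ) ≤ (q:ℝ)^d := by
      have h1 : (Finset.univ.filter p).card ≤ q^d := by
        calc (Finset.univ.filter p).card
            ≤ ∏ i : Fin d,
              (Finset.univ.filter (fun c : ZMod (m*q) => cf m q c = cf m q (x i))).card :=
              card_filter_pi_le (fun i c => cf m q c = cf m q (x i))
          _ ≤ ∏ _i : Fin d, q := Finset.prod_le_prod' (fun i _ =>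
              card_cell_fiber_le m q (by omega) (cf m q (x i)))
          _ = q^d := by rw [Finset.prod_const, Finset.card_univ, Fintype.card_fin]
      calc ((Finset.univ.filter p).card : ℝ) ≤ ((q^d : ℕ) : ℝ) := by exact_mod_cast h1
        _ = (q:ℝ)^d := by push_cast; ring
    calc ∑ y ∈ Finset.univ.filter p, f y ≤ (Finset.univ.filter p).card • B1 :=
          Finset.sum_le_card_nsmul _ _ _ hterm
      _ = ((Finset.univ.filter p).card : ℝ) * B1 := nsmul_eq_mul _ _
      _ ≤ (q:ℝ)^d * B1 := mul_le_mul_of_nonneg_right hcard hB1n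
  -- part 2 : different cells
  have hpart2 : ∑ y ∈ Finset.univ.filter (fun y => ¬ p y), f y ≤ ((2*t0+1 : ℕ):ℝ)^d * B2 := by
    set S : Finset (Fin d → ZMod (m*q)) :=
      Finset.univ.filter (fun y => ∀ i, td (m*q) (x i - y i) ≤ t0) with hS
    have hvanish : ∀ y ∈ Finset.univ.filter (fun y => ¬ p y),
        y ∉ (Finset.univ.filter (fun y => ¬ p y)) ∩ S → f y = 0 := by
      intro y hy hyn
      have hyS : y ∉ S := by
        intro hc
        exact hyn (Finset.mem_inter.mpr ⟨hy, hc⟩)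
      rw [hS, Finset.mem_filter] at hyS
      push_neg at hyS
      obtain ⟨i0, hi0⟩ := hyS (Finset.mem_univ y)
      have hi0' : t0 < td (m*q) (x i0 - y i0) := by omega
      have htd_cast : L < (td (m*q) (x i0 - y i0) : ℝ) := by
        have h1 : ((t0 : ℕ) : ℝ) < (td (m*q) (x i0 - y i0) : ℝ) := by exact_mod_cast hi0'
        rw [ht0] at h1
        push_cast at h1
        have h2 : L ≤ (⌈L⌉₊ : ℝ) := Nat.le_ceil L
        linarith
      have hz0 : x - y ≠ 0 := by
        intro hc
        have : x i0 - y i0 = 0 := congrFun hc i0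
        rw [this] at hi0'
        simp [td, ZMod.val_zero] at hi0'
      have hJ1 : Jpot d (m*q) L V (x - y) = 0 := by
        rw [Jpot_eq d (m*q) L V hL.ne' _ hz0]
        rw [V_phi_zero d (m*q) L V hL hsupp (x - y) i0 ?_, mul_zero]
        rw [abs_cent]
        exact htd_cast
      have hJ2 : Kpot d m q L V x y = 0 := by
        rw [Kpot]
        set w := wvec d m q (fun i => cf m q (x i)) (fun i => cf m q (y i)) with hw
        by_cases hw0 : w = 0
        · rw [hw0, Jpot_zero]
        · rw [Jpot_eq d (m*q) L V hL.ne' _ hw0]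
          rw [V_phi_zero d (m*q) L V hL hsupp w i0 ?_, mul_zero]
          rw [abs_cent]
          have hsub : td (m*q) (x i0 - y i0) ≤ td (m*q) (w i0) + td (m*q) ((x i0 - y i0) - w i0) := by
            have := td_add_le (m*q) (w i0) ((x i0 - y i0) - w i0)
            simpa using this
          have hcell : td (m*q) ((x i0 - y i0) - w i0) ≤ q - 1 := td_cell m q hm hq (x i0) (y i0)
          have hwlow : ⌈L⌉₊ + 1 ≤ td (m*q) (w i0) := by omega
          have h3 : (⌈L⌉₊ : ℝ) + 1 ≤ (td (m*q) (w i0) : ℝ) := by exact_mod_cast hwlow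
          have h2 : L ≤ (⌈L⌉₊ : ℝ) := Nat.le_ceil L
          linarith
      show |Jpot d (m*q) L V (x - y) - Kpot d m q L V x y| = 0
      rw [hJ1, hJ2, sub_zero, abs_zero]
    have hsum_eq : ∑ y ∈ Finset.univ.filter (fun y => ¬ p y), f y
        = ∑ y ∈ (Finset.univ.filter (fun y => ¬ p y)) ∩ S, f y :=
      (Finset.sum_subset Finset.inter_subset_left (fun y hy hyn => hvanish y hy hyn)).symm
    have hterm : ∀ y ∈ (Finset.univ.filter (fun y => ¬ p y)) ∩ S, f y ≤ B2 := by
      intro y hy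
      have hy1 : ¬ p y := (Finset.mem_filter.mp (Finset.mem_inter.mp hy).1).2
      obtain ⟨i1, hi1⟩ := not_forall.mp hy1
      have hz0 : x - y ≠ 0 := by
        intro hc
        apply hi1
        have h4 : x i1 - y i1 = 0 := congrFun hc i1
        have h5 := sub_eq_zero.mp h4
        rw [h5]
      set w := wvec d m q (fun i => cf m q (x i)) (fun i => cf m q (y i)) with hw
      have hw0 : w ≠ 0 := by
        intro hc
        have hcomp : w i1 = 0 := congrFun hc i1
        exact wvec_ne_zero m q hq (cf m q (x i1)) (cf m q (y i1)) (fun h => hi1 h.symm) hcomp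
      have hclose : ∀ i, td (m*q) ((x - y) i - w i) ≤ q - 1 :=
        fun i => td_cell m q hm hq (x i) (y i)
      show |Jpot d (m*q) L V (x - y) - Kpot d m q L V x y| ≤ B2
      have hKw : Kpot d m q L V x y = Jpot d (m*q) L V w := rfl
      rw [hKw, hB2]
      exact pair_est d (m*q) L V hd hV hsupp GV hGV q hq hLq hnL (x - y) w hz0 hw0 hclose
    have hcardS : (S.card : ℝ) ≤ ((2*t0+1 : ℕ):ℝ)^d := by
      have h1 : S.card ≤ (2*t0+1)^d := by
        calc S.card
            ≤ ∏ i : Fin d,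
              (Finset.univ.filter (fun c : ZMod (m*q) => td (m*q) (x i - c) ≤ t0)).card :=
              card_filter_pi_le (fun i c => td (m*q) (x i - c) ≤ t0)
          _ ≤ ∏ _i : Fin d, (2*t0+1) := by
              apply Finset.prod_le_prod'
              intro i _
              calc (Finset.univ.filter (fun c : ZMod (m*q) => td (m*q) (x i - c) ≤ t0)).card
                  ≤ (Finset.univ.filter (fun c : ZMod (m*q) => td (m*q) c ≤ t0)).card := by
                    apply Finset.card_le_card_of_injOn (fun c => x i - c)
                    · intro c hc
                      rw [Finset.mem_coe, Finset.mem_filter] at hc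
                      rw [Finset.mem_coe, Finset.mem_filter]
                      exact ⟨Finset.mem_univ _, hc.2⟩
                    · intro c1 _ c2 _ hcc
                      exact sub_right_injective hcc
                _ ≤ 2*t0+1 := card_td_le (m*q) t0
          _ = (2*t0+1)^d := by rw [Finset.prod_const, Finset.card_univ, Fintype.card_fin]
      exact_mod_cast h1
    calc ∑ y ∈ Finset.univ.filter (fun y => ¬ p y), f y
        = ∑ y ∈ (Finset.univ.filter (fun y => ¬ p y)) ∩ S, f y := hsum_eq
      _ ≤ ((Finset.univ.filter (fun y => ¬ p y)) ∩ S).card • B2 :=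
          Finset.sum_le_card_nsmul _ _ _ hterm
      _ = (((Finset.univ.filter (fun y => ¬ p y)) ∩ S).card : ℝ) * B2 := nsmul_eq_mul _ _
      _ ≤ (S.card : ℝ) * B2 := by
          apply mul_le_mul_of_nonneg_right _ hB2n
          exact_mod_cast Finset.card_le_card Finset.inter_subset_right
      _ ≤ ((2*t0+1 : ℕ):ℝ)^d * B2 := mul_le_mul_of_nonneg_right hcardS hB2n
  -- arithmetic finish
  have e1 : (q:ℝ)^d * B1 ≤ 3 * (((q:ℝ)/L) * GV) := by
    rw [hB1]
    have h1 : (q:ℝ)^d * ((1/L^d) * (3*GV)) = 3 * (((q:ℝ)/L)^d * GV) := by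
      rw [div_pow]
      field_simp
    rw [h1]
    have h2 : ((q:ℝ)/L)^d ≤ (q:ℝ)/L := by
      have h3 : ((q:ℝ)/L)^d ≤ ((q:ℝ)/L)^1 :=
        pow_le_pow_of_le_one (by positivity) ((div_le_one hL).mpr hLq) hd
      rwa [pow_one] at h3
    have := mul_le_mul_of_nonneg_right h2 hGV0
    linarith
  have e2 : ((2*t0+1 : ℕ):ℝ)^d * B2 ≤ 6^d * Real.sqrt d * (((q:ℝ)/L) * GV) := by
    have hceil : (⌈L⌉₊ : ℝ) ≤ L + 1 := (Nat.ceil_lt_add_one hL.le).le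
    have h1 : ((2*t0+1 : ℕ):ℝ) ≤ 6*L := by
      rw [ht0]
      push_cast
      linarith
    have h2 : ((2*t0+1 : ℕ):ℝ)^d ≤ (6*L)^d := pow_le_pow_left₀ (by positivity) h1 d
    have h3 : (6*L)^d * B2 = 6^d * Real.sqrt d * (((q:ℝ)/L) * GV) := by
      rw [hB2, mul_pow]
      field_simp
    calc ((2*t0+1 : ℕ):ℝ)^d * B2 ≤ (6*L)^d * B2 := mul_le_mul_of_nonneg_right h2 hB2n
      _ = 6^d * Real.sqrt d * (((q:ℝ)/L) * GV) := h3
  have hfinal : ((3:ℝ) + 6^d * Real.sqrt d) * ((q:ℝ)/L) * GV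
      = 3 * (((q:ℝ)/L) * GV) + 6^d * Real.sqrt d * (((q:ℝ)/L) * GV) := by ring
  rw [hsplit, hfinal]
  exact add_le_add (le_trans hpart1 e1) (le_trans hpart2 e2)

set_option maxHeartbeats 2000000 in
/-- **A priori error of the first coarse-grained Hamiltonian:** there is a constant `C`
depending only on the dimension `d` such that for every spin configuration `σ`,
`(1/N) |H_N(σ) − H̄⁰(F(σ))| ≤ C (q/L) ‖∇V‖_∞`, where `H̄⁰(η) = E[H_N | F = η]`. -/
theorem first_coarse_hamiltonian_error
    (d : ℕ) (hd : 1 ≤ d) :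
    ∃ C : ℝ, ∀ (m q : ℕ) [NeZero m] [NeZero (m * q)], 1 ≤ m → 2 ≤ q →
      ∀ V : EuclideanSpace ℝ (Fin d) → ℝ, ContDiff ℝ 1 V →
        (∀ z, V (-z) = V z) →
        (∀ z, 1 < ‖z‖ → V z = 0) →
        ∀ GV : ℝ, (∀ z, ‖gradient V z‖ ≤ GV) →
          ∀ L : ℝ, (q : ℝ) ≤ L → L ≤ ((m : ℝ) * (q : ℝ)) / 4 →
            ∀ h : ℝ, ∀ σ : (Fin d → ZMod (m * q)) → Bool,
              (1 / ((m : ℝ) * (q : ℝ)) ^ d) *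
                  |ham d (m * q) (Jpot d (m * q) L V) h σ -
                    (∑ σ' ∈ fiber d m q (blockF d m q σ),
                        ham d (m * q) (Jpot d (m * q) L V) h σ') /
                      ((fiber d m q (blockF d m q σ)).card : ℝ)|
                ≤ C * ((q : ℝ) / L) * GV := by
  refine ⟨(3:ℝ) + 6^d * Real.sqrt d, ?_⟩
  intro m q _ _ hm1 hq V hV hVeven hVsupp GV hGV L hLq hLn h σ
  have hGV0 : 0 ≤ GV := le_trans (norm_nonneg _) (hGV 0)
  have hq0 : (0:ℝ) < q := by positivity
  have hL : 0 < L := lt_of_lt_of_le hq0 hLq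
  have hLn' : 4*L ≤ (m:ℝ)*q := by linarith
  have hm4 : (4:ℝ) ≤ (m:ℝ) := by nlinarith
  have hm2 : 2 ≤ m := by exact_mod_cast le_trans (by norm_num : (2:ℝ) ≤ 4) hm4
  set R : ℝ := ((3:ℝ) + 6^d * Real.sqrt d) * ((q:ℝ)/L) * GV with hR
  have hR0 : 0 ≤ R := by
    rw [hR]
    have : (0:ℝ) ≤ Real.sqrt d := Real.sqrt_nonneg _
    positivity
  set N : ℝ := ((m*q : ℕ):ℝ)^d with hN
  have hN0 : 0 < N := by
    rw [hN]
    have : (0:ℝ) < ((m*q : ℕ):ℝ) := by positivity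
    positivity
  -- rewrite ham as unrestricted double sum
  have hham : ∀ σ' : (Fin d → ZMod (m*q)) → Bool,
      ham d (m*q) (Jpot d (m*q) L V) h σ' =
        -(1/2) * (∑ x : Fin d → ZMod (m*q), ∑ y : Fin d → ZMod (m*q),
            Jpot d (m*q) L V (x - y) * (spin (σ' x) * spin (σ' y)))
          + h * ∑ x : Fin d → ZMod (m*q), spin (σ' x) := by
    intro σ'
    rw [ham]
    have hx : ∀ x : Fin d → ZMod (m*q),
        (∑ y ∈ Finset.univ.filter (fun y => y ≠ x),
          Jpot d (m*q) L V (x - y) * (spin (σ' x) * spin (σ' y)))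
        = ∑ y : Fin d → ZMod (m*q), Jpot d (m*q) L V (x - y) * (spin (σ' x) * spin (σ' y)) := by
      intro x
      rw [Finset.filter_ne']
      apply Finset.sum_erase
      rw [sub_self, Jpot_zero, zero_mul]
    congr 1
    congr 1
    exact Finset.sum_congr rfl (fun x _ => hx x)
  -- difference with Hbar
  have hdiff : ∀ σ' : (Fin d → ZMod (m*q)) → Bool,
      |ham d (m*q) (Jpot d (m*q) L V) h σ' - Hbar d m q L V h σ'| ≤ (1/2) * (N * R) := by
    intro σ'
    rw [hham σ', Hbar]
    have hc : (-(1/2) * (∑ x : Fin d → ZMod (m*q), ∑ y : Fin d → ZMod (m*q),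
            Jpot d (m*q) L V (x - y) * (spin (σ' x) * spin (σ' y)))
          + h * ∑ x : Fin d → ZMod (m*q), spin (σ' x))
        - (-(1/2) * (∑ x, ∑ y, Kpot d m q L V x y * (spin (σ' x) * spin (σ' y)))
          + h * ∑ x, spin (σ' x))
        = -(1/2) * ((∑ x : Fin d → ZMod (m*q), ∑ y : Fin d → ZMod (m*q),
            Jpot d (m*q) L V (x - y) * (spin (σ' x) * spin (σ' y)))
          - (∑ x, ∑ y, Kpot d m q L V x y * (spin (σ' x) * spin (σ' y)))) := by ring
    rw [hc, abs_mul]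
    have h12 : |(-(1/2) : ℝ)| = 1/2 := by norm_num
    rw [h12]
    have hsum : |(∑ x : Fin d → ZMod (m*q), ∑ y : Fin d → ZMod (m*q),
            Jpot d (m*q) L V (x - y) * (spin (σ' x) * spin (σ' y)))
          - (∑ x, ∑ y, Kpot d m q L V x y * (spin (σ' x) * spin (σ' y)))| ≤ N * R := by
      rw [← Finset.sum_sub_distrib]
      have step1 : ∀ x : Fin d → ZMod (m*q),
          |(∑ y : Fin d → ZMod (m*q), Jpot d (m*q) L V (x - y) * (spin (σ' x) * spin (σ' y)))
            - ∑ y, Kpot d m q L V x y * (spin (σ' x) * spin (σ' y))| ≤ R := by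
        intro x
        rw [← Finset.sum_sub_distrib]
        calc |∑ y : Fin d → ZMod (m*q),
                (Jpot d (m*q) L V (x - y) * (spin (σ' x) * spin (σ' y))
                  - Kpot d m q L V x y * (spin (σ' x) * spin (σ' y)))|
            ≤ ∑ y : Fin d → ZMod (m*q),
                |Jpot d (m*q) L V (x - y) * (spin (σ' x) * spin (σ' y))
                  - Kpot d m q L V x y * (spin (σ' x) * spin (σ' y))| :=
              Finset.abs_sum_le_sum_abs _ _
          _ = ∑ y : Fin d → ZMod (m*q), |Jpot d (m*q) L V (x - y) - Kpot d m q L V x y| := by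
              apply Finset.sum_congr rfl
              intro y _
              rw [← sub_mul, abs_mul, abs_mul, abs_spin, abs_spin, mul_one, mul_one]
          _ ≤ R := row_est d m q hd hm2 hq V hV hVsupp GV hGV L hLq hLn' x
      calc |∑ x : Fin d → ZMod (m*q),
              ((∑ y : Fin d → ZMod (m*q), Jpot d (m*q) L V (x - y) * (spin (σ' x) * spin (σ' y)))
                - ∑ y, Kpot d m q L V x y * (spin (σ' x) * spin (σ' y)))|
          ≤ ∑ x : Fin d → ZMod (m*q),
              |(∑ y : Fin d → ZMod (m*q), Jpot d (m*q) L V (x - y) * (spin (σ' x) * spin (σ' y)))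
                - ∑ y, Kpot d m q L V x y * (spin (σ' x) * spin (σ' y))| :=
            Finset.abs_sum_le_sum_abs _ _
        _ ≤ (Finset.univ : Finset (Fin d → ZMod (m*q))).card • R :=
            Finset.sum_le_card_nsmul _ _ _ (fun x _ => step1 x)
        _ = ((Finset.univ : Finset (Fin d → ZMod (m*q))).card : ℝ) * R := nsmul_eq_mul _ _
        _ = N * R := by
            rw [Finset.card_univ]
            congr 1
            rw [hN]
            rw [Fintype.card_pi]
            simp [ZMod.card]
    linarith [hsum]
  -- Hbar is constant on the fiber
  have hHbar_const : ∀ σ' ∈ fiber d m q (blockF d m q σ),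
      Hbar d m q L V h σ' = Hbar d m q L V h σ := by
    intro σ' hσ'
    rw [fiber, Finset.mem_filter] at hσ'
    rw [Hbar_blockF, Hbar_blockF, hσ'.2]
  -- assembly
  set F := fiber d m q (blockF d m q σ) with hF
  have hσF : σ ∈ F := by
    rw [hF, fiber, Finset.mem_filter]
    exact ⟨Finset.mem_univ _, rfl⟩
  have hcard0 : (0:ℝ) < (F.card : ℝ) := by
    have : 0 < F.card := Finset.card_pos.mpr ⟨σ, hσF⟩
    exact_mod_cast this
  set H := ham d (m*q) (Jpot d (m*q) L V) h with hH
  have key : ∀ σ' ∈ F, |H σ - H σ'| ≤ N * R := by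
    intro σ' hσ'
    have hdec : H σ - H σ' = (H σ - Hbar d m q L V h σ) + (Hbar d m q L V h σ' - H σ') := by
      rw [hHbar_const σ' hσ']
      ring
    calc |H σ - H σ'| ≤ |H σ - Hbar d m q L V h σ| + |Hbar d m q L V h σ' - H σ'| := by
          rw [hdec]; exact abs_add_le _ _
      _ ≤ (1/2) * (N * R) + (1/2) * (N * R) := by
          refine add_le_add (hdiff σ) ?_
          rw [abs_sub_comm]
          exact hdiff σ'
      _ = N * R := by ring
  have habs : |H σ - (∑ σ' ∈ F, H σ') / (F.card : ℝ)| ≤ N * R := by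
    have hrw : H σ - (∑ σ' ∈ F, H σ') / (F.card : ℝ)
        = (∑ σ' ∈ F, (H σ - H σ')) / (F.card : ℝ) := by
      rw [Finset.sum_sub_distrib, Finset.sum_const, nsmul_eq_mul]
      field_simp
    rw [hrw, abs_div, abs_of_pos hcard0, div_le_iff₀ hcard0]
    calc |∑ σ' ∈ F, (H σ - H σ')| ≤ ∑ σ' ∈ F, |H σ - H σ'| := Finset.abs_sum_le_sum_abs _ _
      _ ≤ F.card • (N * R) := Finset.sum_le_card_nsmul _ _ _ key
      _ = (F.card : ℝ) * (N * R) := nsmul_eq_mul _ _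
      _ = N * R * (F.card : ℝ) := by ring
  have hNeq : ((m:ℝ) * (q:ℝ))^d = N := by
    rw [hN]; push_cast; ring
  rw [hNeq]
  calc (1/N) * |H σ - (∑ σ' ∈ F, H σ') / (F.card : ℝ)|
      ≤ (1/N) * (N * R) := by
        apply mul_le_mul_of_nonneg_left habs
        positivity
    _ = R := by field_simp
    _ = ((3:ℝ) + 6^d * Real.sqrt d) * ((q:ℝ)/L) * GV := hR
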